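/- Let 𝒰 ⊂ 𝕋^d × ℂ be an open set whose fibers 𝒰_θ are simply connected domains containing 0, different from ℂ, uniformly bounded, with constant conformal radius at 0, and such that the closure of 𝒰_θ depends continuously on θ. Let θₙ → θ̃ in 𝕋^d. Then the sequence of domains 𝒰_{θₙ} converges in the sense of Carathéodory kernel convergence to 𝒰_{θ̃}: every subsequence of {𝒰_{θₙ}} has kernel equal to 𝒰_{θ̃}. -/

import Mathlib

open Metric Set Filter Topology TopologicalSpace

instance : Fact ((0:ℝ) < 1) := ⟨one_pos⟩

/-- The `d`-dimensional torus `𝕋^d = ℝ^d/ℤ^d`. -/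
abbrev Torus (d : ℕ) := Fin d → AddCircle (1:ℝ)

/-- The Carathéodory kernel (at `0`) of a sequence of sets: the union of `{0}` with all
points possessing a domain neighborhood contained in `O n` for all large `n`. -/
def caraKernel (O : ℕ → Set ℂ) : Set ℂ :=
  insert (0:ℂ) {z : ℂ | ∃ Ω : Set ℂ, IsOpen Ω ∧ IsConnected Ω ∧ z ∈ Ω ∧
    ∀ᶠ n in atTop, Ω ⊆ O n}

noncomputable def Complex.abs : AbsoluteValue ℂ ℝ :=
  IsAbsoluteValue.toAbsoluteValue (norm : ℂ → ℝ)

@[simp]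
lemma Complex.norm_eq_abs (z : ℂ) : ‖z‖ = Complex.abs z := rfl

@[simp]
lemma Complex.abs_ofReal (r : ℝ) : Complex.abs (r : ℂ) = |r| := Complex.norm_real r

@[simp]
lemma Complex.abs_conj (z : ℂ) : Complex.abs (starRingEnd ℂ z) = Complex.abs z :=
  Complex.norm_conj z

@[simp]
lemma Complex.sq_abs (z : ℂ) : Complex.abs z ^ 2 = Complex.normSq z := Complex.sq_norm z

lemma Complex.abs_exp (z : ℂ) : Complex.abs (Complex.exp z) = Real.exp z.re :=
  Complex.norm_exp z

lemma Complex.abs_re_le_abs (z : ℂ) : |z.re| ≤ Complex.abs z := Complex.abs_re_le_norm z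

lemma Complex.continuous_abs : Continuous Complex.abs := continuous_norm

open Complex ComplexConjugate

section Auxiliary

lemma aux_normSq_identity (M : ℝ) (a b : ℂ) :
    Complex.normSq ((↑(M^2) : ℂ) - conj b * a) - M^2 * Complex.normSq (a - b)
      = (M^2 - Complex.normSq a) * (M^2 - Complex.normSq b) := by
  simp only [Complex.normSq_apply, Complex.sub_re, Complex.sub_im, Complex.mul_re,
    Complex.mul_im, Complex.conj_re, Complex.conj_im, Complex.ofReal_re, Complex.ofReal_im]
  ring

lemma quad_real {x y t : ℝ} (hx0 : 0 ≤ x) (hy0 : 0 ≤ y) (ht0 : 0 ≤ t) (hy1 : y < 1) (ht1 : t < 1)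
    (key : (1 - t^2) * (1 - x*y)^2 ≤ (1 - x^2) * (1 - y^2)) : x*(1+t*y) ≤ t+y := by
  have hfac : (x*(1+t*y) - (t+y)) * (x*(1-t*y) - (y-t)) ≤ 0 := by nlinarith [key]
  have h2t : 0 ≤ 2*t*(1 - y^2) := mul_nonneg (by linarith) (by nlinarith)
  by_contra hcon
  push_neg at hcon
  have hA : 0 < x*(1+t*y) - (t+y) := by linarith
  have hB : x*(1-t*y) - (y-t) ≤ 0 := by
    by_contra hB'
    push_neg at hB'
    nlinarith [mul_pos hA hB']
  have hty : t*y < 1 := by nlinarith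
  have c1 : 0 < (1 - t*y) * (x*(1+t*y) - (t+y)) := mul_pos (by linarith) hA
  have c2 : (1 + t*y) * (x*(1-t*y) - (y-t)) ≤ 0 :=
    mul_nonpos_of_nonneg_of_nonpos (by nlinarith [mul_nonneg ht0 hy0]) hB
  nlinarith [c1, c2, h2t]

lemma pseudo_hyp_bound {a b : ℂ} {t : ℝ} (ha : abs a < 1) (hb : abs b < 1)
    (ht0 : 0 ≤ t) (ht1 : t < 1) (hab : abs (a - b) ≤ t * abs (1 - conj b * a)) :
    abs a ≤ (t + abs b) / (1 + t * abs b) := by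
  have hx0 : 0 ≤ abs a := Complex.abs.nonneg a
  have hy0 : 0 ≤ abs b := Complex.abs.nonneg b
  have hid := aux_normSq_identity 1 a b
  simp only [one_pow, Complex.ofReal_one, one_mul, ← Complex.sq_abs] at hid
  have h1 : (abs (a - b))^2 ≤ t^2 * (abs (1 - conj b * a))^2 := by
    nlinarith [mul_self_le_mul_self (Complex.abs.nonneg (a-b)) hab]
  have h2 : 1 - abs a * abs b ≤ abs (1 - conj b * a) := by
    have htr : Complex.abs 1 ≤ abs (1 - conj b * a) + abs (conj b * a) := by
      simpa using Complex.abs.add_le (1 - conj b * a) (conj b * a)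
    have habs : abs (conj b * a) = abs b * abs a := by rw [map_mul, Complex.abs_conj]
    simp only [map_one] at htr
    nlinarith
  have h2' : (1 - abs a * abs b)^2 ≤ (abs (1 - conj b * a))^2 := by
    have hxy : 0 ≤ 1 - abs a * abs b := by nlinarith
    nlinarith [mul_self_le_mul_self hxy h2]
  have ht2 : t^2 ≤ 1 := by nlinarith
  have key : (1 - t^2) * (1 - abs a * abs b)^2 ≤ (1 - (abs a)^2) * (1 - (abs b)^2) := by
    nlinarith [mul_nonneg (show (0:ℝ) ≤ 1 - t^2 by linarith)
      (sub_nonneg.mpr h2')]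
  have hden : 0 < 1 + t * abs b := by nlinarith
  rw [le_div_iff₀ hden]
  exact quad_real hx0 hy0 ht0 hb ht1 key

/-- Schwarz–Pick type inequality for a holomorphic map of `ball 0 R` into `closedBall 0 M`. -/
lemma schwarz_pick {F : ℂ → ℂ} {R M : ℝ} (hR : 0 < R) (hM : 0 < M)
    (hd : DifferentiableOn ℂ F (ball 0 R)) (hm : MapsTo F (ball 0 R) (closedBall 0 M))
    {a : ℂ} (ha : a ∈ ball (0:ℂ) R) :
    M * abs (F a - F 0) ≤ abs a / R * abs ((↑(M^2) : ℂ) - conj (F 0) * F a) := by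
  have h0 : (0:ℂ) ∈ ball (0:ℂ) R := mem_ball_self hR
  have hb : abs (F 0) ≤ M := by simpa [mem_closedBall, dist_zero_right] using hm h0
  rcases eq_or_lt_of_le hb with hbM | hbM
  · -- |F 0| = M : maximum modulus forces F constant
    have hmax : IsMaxOn (norm ∘ F) (ball 0 R) 0 := by
      intro ζ hζ
      have := hm hζ
      simp only [Function.comp_apply, Complex.norm_eq_abs, mem_closedBall,
        dist_zero_right, Complex.norm_eq_abs] at *
      simpa [hbM] using this
    have hconst := Complex.eqOn_of_isPreconnected_of_isMaxOn_norm
      (convex_ball (0:ℂ) R).isPreconnected isOpen_ball hd h0 hmax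
    have : F a = F 0 := hconst ha
    rw [this, sub_self, map_zero, mul_zero]
    positivity
  · -- |F 0| < M
    set b := F 0 with hbdef
    have hden : ∀ ζ ∈ ball (0:ℂ) R, ((↑(M^2) : ℂ) - conj b * F ζ) ≠ 0 := by
      intro ζ hζ
      have hFζ : abs (F ζ) ≤ M := by
        simpa [mem_closedBall, dist_zero_right] using hm hζ
      intro hcontra
      have : abs ((↑(M^2) : ℂ)) = abs (conj b * F ζ) := by
        rw [show ((↑(M^2):ℂ)) = conj b * F ζ from by linear_combination hcontra]
      rw [map_mul, Complex.abs_conj, Complex.abs_ofReal] at this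
      have h1 : |M^2| = M^2 := abs_of_nonneg (by positivity)
      nlinarith [Complex.abs.nonneg (F ζ), Complex.abs.nonneg b]
    set G := fun ζ => (M:ℂ) * (F ζ - b) / ((↑(M^2) : ℂ) - conj b * F ζ) with hGdef
    have hG0 : G 0 = 0 := by simp [hGdef, hbdef]
    have hGd : DifferentiableOn ℂ G (ball 0 R) := by
      apply DifferentiableOn.div
      · exact (differentiableOn_const _).mul (hd.sub (differentiableOn_const _))
      · exact (differentiableOn_const _).sub ((differentiableOn_const _).mul hd)
      · exact hden
    have hGm : ∀ ζ ∈ ball (0:ℂ) R, abs (G ζ) ≤ 1 := by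
      intro ζ hζ
      have hFζ : abs (F ζ) ≤ M := by
        simpa [mem_closedBall, dist_zero_right] using hm hζ
      have hid := aux_normSq_identity M (F ζ) b
      have hnum : (0:ℝ) ≤ (M^2 - Complex.normSq (F ζ)) * (M^2 - Complex.normSq b) := by
        have e1 : Complex.normSq (F ζ) ≤ M^2 := by
          rw [← Complex.sq_abs]; nlinarith [Complex.abs.nonneg (F ζ)]
        have e2 : Complex.normSq b ≤ M^2 := by
          rw [← Complex.sq_abs]; nlinarith [Complex.abs.nonneg b]
        nlinarith
      have hkey : M^2 * Complex.normSq (F ζ - b) ≤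
          Complex.normSq ((↑(M^2) : ℂ) - conj b * F ζ) := by linarith
      have habsle : M * abs (F ζ - b) ≤ abs ((↑(M^2) : ℂ) - conj b * F ζ) := by
        have h1 : (M * abs (F ζ - b))^2 ≤ (abs ((↑(M^2) : ℂ) - conj b * F ζ))^2 := by
          rw [mul_pow, Complex.sq_abs, Complex.sq_abs]; exact hkey
        have h2 : 0 ≤ M * abs (F ζ - b) := by positivity
        nlinarith [Complex.abs.nonneg ((↑(M^2) : ℂ) - conj b * F ζ)]
      rw [hGdef]
      simp only [map_div₀, map_mul, Complex.abs_ofReal, _root_.abs_of_nonneg hM.le]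
      rw [div_le_one (by
        have := hden ζ hζ
        exact (Complex.abs.pos this))]
      simpa using habsle
    -- Schwarz for all M' > 1
    have hSch : ∀ M' : ℝ, 1 < M' → abs (G a) ≤ M' / R * abs a := by
      intro M' hM'
      have hmaps : MapsTo G (ball 0 R) (ball (G 0) M') := by
        intro ζ hζ
        rw [hG0]
        simp only [mem_ball, dist_zero_right, Complex.norm_eq_abs]
        exact lt_of_le_of_lt (hGm ζ hζ) hM'
      have := Complex.dist_le_div_mul_dist_of_mapsTo_ball hGd (hmaps.mono_right ball_subset_closedBall) ha
      rw [hG0] at this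
      simpa [dist_zero_right, Complex.norm_eq_abs] using this
    have hGa : abs (G a) ≤ 1 / R * abs a := by
      have htend : Tendsto (fun M' : ℝ => M' / R * abs a) (𝓝[>] (1:ℝ)) (𝓝 (1 / R * abs a)) := by
        apply Tendsto.mono_left _ nhdsWithin_le_nhds
        exact (Filter.Tendsto.div_const tendsto_id R).mul_const _
      exact ge_of_tendsto htend (eventually_nhdsWithin_of_forall (fun M' hM' => hSch M' hM'))
    -- unfold G
    have hdena := hden a ha
    have : abs (G a) = M * abs (F a - b) / abs ((↑(M^2) : ℂ) - conj b * F a) := by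
      rw [hGdef]
      simp [map_div₀, map_mul, Complex.abs_ofReal, _root_.abs_of_nonneg hM.le]
    rw [this] at hGa
    rw [div_le_iff₀ (Complex.abs.pos hdena)] at hGa
    calc M * abs (F a - b) ≤ 1 / R * abs a * abs ((↑(M^2) : ℂ) - conj b * F a) := hGa
      _ = abs a / R * abs ((↑(M^2) : ℂ) - conj b * F a) := by ring

/-- Quantitative Schwarz-type estimate: a holomorphic self map of disks `ball 0 ρ → ball 0 1`
fixing `0` with derivative `1` at `0` is within `s^2*(1/ρ^2-1)/(1-s)` of the identity on
`closedBall 0 s`. -/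
lemma approx_id {g : ℂ → ℂ} {ρ s : ℝ} (hρ0 : 0 < ρ) (hρ1 : ρ ≤ 1) (hs0 : 0 ≤ s) (hsρ : s < ρ)
    (hd : DifferentiableOn ℂ g (ball 0 ρ)) (hm : MapsTo g (ball 0 ρ) (ball 0 1))
    (h0 : g 0 = 0) (h1 : deriv g 0 = 1) {v : ℂ} (hv : abs v ≤ s) :
    abs (g v - v) ≤ s^2 * (1/ρ^2 - 1) / (1 - s) := by
  have hs1 : s < 1 := lt_of_lt_of_le hsρ hρ1
  have hvball : v ∈ ball (0:ℂ) ρ := by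
    simp only [mem_ball, dist_zero_right, Complex.norm_eq_abs]; linarith
  set φ := dslope g 0 with hφdef
  have hφd : DifferentiableOn ℂ φ (ball 0 ρ) := by
    intro x hx
    rcases eq_or_ne x 0 with rfl | hne
    · have hA : AnalyticAt ℂ g 0 := hd.analyticAt (isOpen_ball.mem_nhds (by
        simp [mem_ball, hρ0]))
      obtain ⟨p, hp⟩ := hA
      exact ((HasFPowerSeriesAt.has_fpower_series_dslope_fslope hp).analyticAt).differentiableAt.differentiableWithinAt
    · exact (differentiableWithinAt_dslope_of_ne hne).mpr (hd x hx)
  have hφm : MapsTo φ (ball 0 ρ) (closedBall 0 (1/ρ)) := by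
    intro x hx
    have hmaps' : MapsTo g (ball 0 ρ) (ball (g 0) 1) := by rwa [h0]
    have := Complex.norm_dslope_le_div_of_mapsTo_ball hd (hmaps'.mono_right ball_subset_closedBall) hx
    simpa [mem_closedBall, dist_zero_right] using this
  have hφ0 : φ 0 = 1 := by rw [hφdef, dslope_same, h1]
  have hSP := schwarz_pick hρ0 (by positivity : (0:ℝ) < 1/ρ) hφd hφm hvball
  rw [hφ0] at hSP
  simp only [map_one, one_mul] at hSP
  -- hSP : 1/ρ * abs (φ v - 1) ≤ abs v / ρ * abs (↑((1/ρ)^2) - φ v)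
  have hSP' : abs (φ v - 1) ≤ abs v * abs (((((1/ρ)^2 : ℝ)) : ℂ) - φ v) := by
    have h := mul_le_mul_of_nonneg_left hSP hρ0.le
    have e1 : ρ * (1/ρ * abs (φ v - 1)) = abs (φ v - 1) := by field_simp
    have e2 : ρ * (abs v / ρ * abs (((((1/ρ)^2 : ℝ)) : ℂ) - φ v))
        = abs v * abs (((((1/ρ)^2 : ℝ)) : ℂ) - φ v) := by field_simp
    rw [e1, e2] at h
    exact h
  have htri : abs (((((1/ρ)^2 : ℝ)) : ℂ) - φ v) ≤ (1/ρ^2 - 1) + abs (φ v - 1) := by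
    have : (((((1/ρ)^2 : ℝ)) : ℂ) - φ v) = (((((1/ρ)^2 : ℝ)) : ℂ) - 1) + (1 - φ v) := by ring
    rw [this]
    refine le_trans (Complex.abs.add_le _ _) ?_
    have e1 : abs (((((1/ρ)^2 : ℝ)) : ℂ) - 1) = 1/ρ^2 - 1 := by
      rw [show (((((1/ρ)^2 : ℝ)) : ℂ) - 1) = ((1/ρ^2 - 1 : ℝ) : ℂ) by push_cast; ring]
      rw [Complex.abs_ofReal, _root_.abs_of_nonneg]
      have : 1 ≤ 1/ρ^2 := by
        rw [le_div_iff₀ (by positivity)]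
        nlinarith
      linarith
    rw [e1, Complex.abs.map_sub (1:ℂ) (φ v)]
  set X := abs (φ v - 1) with hXdef
  have hXnn : 0 ≤ X := Complex.abs.nonneg _
  have hc : X * (1 - abs v) ≤ abs v * (1/ρ^2 - 1) := by
    have h3 : X ≤ abs v * ((1/ρ^2 - 1) + X) := le_trans hSP'
      (mul_le_mul_of_nonneg_left htri (Complex.abs.nonneg v))
    nlinarith
  have hXle : X ≤ s * (1/ρ^2 - 1) / (1 - s) := by
    have hρ2 : 0 ≤ 1/ρ^2 - 1 := by
      have : 1 ≤ 1/ρ^2 := by rw [le_div_iff₀ (by positivity)]; nlinarith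
      linarith
    rw [le_div_iff₀ (by linarith : (0:ℝ) < 1 - s)]
    have habsv : abs v ≤ s := hv
    nlinarith [Complex.abs.nonneg v]
  have hgv : g v - v = v * (φ v - 1) := by
    rcases eq_or_ne v 0 with rfl | hne
    · simp [h0]
    · rw [hφdef, dslope_of_ne _ hne, slope_def_field, h0]
      field_simp
      ring
  rw [hgv, map_mul]
  calc abs v * X ≤ s * (s * (1/ρ^2 - 1) / (1 - s)) :=
        mul_le_mul hv hXle hXnn hs0
    _ = s^2 * (1/ρ^2 - 1) / (1 - s) := by ring

/-- A holomorphic function uniformly close to the identity on a closed disk attains every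
value sufficiently deep inside the disk (a substitute for Rouché's theorem, proved via the
minimum-modulus/open-mapping principle). -/
lemma exists_preimage {g : ℂ → ℂ} {ρ s ε : ℝ} (hsρ : s < ρ) (hs : 0 < s)
    (hd : DifferentiableOn ℂ g (ball 0 ρ)) (hε : 0 ≤ ε)
    (hcl : ∀ v ∈ closedBall (0:ℂ) s, abs (g v - v) ≤ ε)
    {p : ℂ} (hp : abs p + 2*ε < s) :
    ∃ v ∈ ball (0:ℂ) s, g v = p := by
  have hρ0 : 0 < ρ := lt_trans hs hsρ
  set C := closedBall (0:ℂ) s with hC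
  have hCb : C ⊆ ball (0:ℂ) ρ := closedBall_subset_ball hsρ
  have hCc : IsCompact C := isCompact_closedBall _ _
  have hCne : C.Nonempty := ⟨0, by simp [hC, hs.le]⟩
  have hgc : ContinuousOn (fun v => abs (g v - p)) C := by
    apply Continuous.comp_continuousOn Complex.continuous_abs
    exact (hd.continuousOn.mono hCb).sub continuousOn_const
  obtain ⟨v₀, hv₀C, hmin⟩ := hCc.exists_isMinOn hCne hgc
  have hminp : abs (g v₀ - p) ≤ ε := by
    have hpC : p ∈ C := by
      simp only [hC, mem_closedBall, dist_zero_right, Complex.norm_eq_abs]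
      nlinarith [hε]
    calc abs (g v₀ - p) ≤ abs (g p - p) := hmin hpC
      _ ≤ ε := hcl p hpC
  have hv₀int : abs v₀ < s := by
    by_contra hcon
    push_neg at hcon
    have h1 : abs v₀ = s := le_antisymm (by
      simpa [hC, mem_closedBall, dist_zero_right, Complex.norm_eq_abs] using hv₀C) hcon
    have h2 : abs (v₀ - p) ≥ s - abs p := by
      calc abs (v₀ - p) ≥ abs v₀ - abs p := by
            have := Complex.abs.add_le (v₀ - p) p
            simp only [sub_add_cancel] at this
            linarith
        _ = s - abs p := by rw [h1]
    have h3 : abs (g v₀ - p) ≥ abs (v₀ - p) - abs (g v₀ - v₀) := by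
      have htr : abs (v₀ - p) ≤ abs (v₀ - g v₀) + abs (g v₀ - p) := by
        have e : (v₀ - g v₀) + (g v₀ - p) = v₀ - p := by ring
        rw [← e]
        exact Complex.abs.add_le _ _
      rw [Complex.abs.map_sub v₀ (g v₀)] at htr
      linarith
    have h4 : abs (g v₀ - v₀) ≤ ε := hcl v₀ hv₀C
    linarith
  by_cases hgv : g v₀ = p
  · exact ⟨v₀, by simp [mem_ball, dist_zero_right, Complex.norm_eq_abs, hv₀int], hgv⟩
  exfalso
  have hv₀ball : v₀ ∈ ball (0:ℂ) ρ := hCb hv₀C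
  have hA : AnalyticAt ℂ g v₀ := hd.analyticAt (isOpen_ball.mem_nhds hv₀ball)
  rcases hA.eventually_constant_or_nhds_le_map_nhds_aux with hconst | hle
  · -- g locally constant near v₀ ⟹ g constant on ball 0 ρ ⟹ contradiction
    have heq : EqOn g (fun _ => g v₀) (ball 0 ρ) := by
      apply AnalyticOnNhd.eqOn_of_preconnected_of_eventuallyEq
        (hd.analyticOnNhd isOpen_ball) analyticOnNhd_const
        (convex_ball (0:ℂ) ρ).isPreconnected hv₀ball
      exact hconst
    have e0 : g 0 = g v₀ := heq (by simp [mem_ball, hρ0])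
    have es : g (s:ℂ) = g v₀ := heq (by
      simp only [mem_ball, dist_zero_right, Complex.norm_eq_abs, Complex.abs_ofReal]
      rw [_root_.abs_of_nonneg hs.le]; exact hsρ)
    have b0 : abs (g 0 - 0) ≤ ε := hcl 0 (by simp [hC, hs.le])
    have bs : abs (g (s:ℂ) - s) ≤ ε := by
      apply hcl
      simp only [hC, mem_closedBall, dist_zero_right, Complex.norm_eq_abs, Complex.abs_ofReal]
      rw [_root_.abs_of_nonneg hs.le]
    have hs2 : (s:ℝ) ≤ 2 * ε := by
      have e : (g (s:ℂ) - s) - (g 0 - 0) = -(s:ℂ) := by rw [es, e0]; ring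
      have habs : Complex.abs (-(s:ℂ)) ≤ abs (g (s:ℂ) - s) + abs (g 0 - 0) := by
        rw [← e]
        simpa [sub_eq_add_neg] using Complex.abs.add_le (g (s:ℂ) - s) (-(g 0 - 0))
      have eabs : Complex.abs (-(s:ℂ)) = s := by
        rw [Complex.abs.map_neg, Complex.abs_ofReal, _root_.abs_of_nonneg hs.le]
      rw [eabs] at habs
      linarith
    nlinarith [Complex.abs.nonneg p]
  · -- minimum modulus contradiction using openness
    have hm0 : 0 < abs (g v₀ - p) := by
      rw [Complex.abs.pos_iff]
      exact sub_ne_zero.mpr hgv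
    set η := s - abs v₀ with hη
    have hηpos : 0 < η := by linarith
    have hball_sub : ball v₀ η ⊆ C := by
      intro x hx
      rw [mem_ball, Complex.dist_eq, Complex.norm_eq_abs] at hx
      simp only [hC, mem_closedBall, dist_zero_right, Complex.norm_eq_abs]
      have : abs x ≤ abs (x - v₀) + abs v₀ := by
        simpa using Complex.abs.add_le (x - v₀) v₀
      rw [hη] at *
      linarith
    have hT : g '' (ball v₀ η) ∈ 𝓝 (g v₀) := by
      apply hle
      exact image_mem_map (ball_mem_nhds v₀ hηpos)
    obtain ⟨τ, hτpos, hτsub⟩ := Metric.mem_nhds_iff.mp hT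
    set m := abs (g v₀ - p) with hm
    set δ := min (1/2 : ℝ) (τ / (2 * m)) with hδ
    have hδpos : 0 < δ := lt_min (by norm_num) (by positivity)
    have hδhalf : δ ≤ 1/2 := min_le_left _ _
    set q := g v₀ + (δ:ℂ) * (p - g v₀) with hq
    have hqmem : q ∈ ball (g v₀) τ := by
      rw [mem_ball, Complex.dist_eq, Complex.norm_eq_abs, hq]
      have e : g v₀ + (δ:ℂ) * (p - g v₀) - g v₀ = (δ:ℂ) * (p - g v₀) := by ring
      rw [e, map_mul, Complex.abs_ofReal, _root_.abs_of_nonneg hδpos.le,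
        Complex.abs.map_sub p (g v₀), ← hm]
      have : δ * m ≤ τ / (2 * m) * m := by
        apply mul_le_mul_of_nonneg_right (min_le_right _ _) (Complex.abs.nonneg _)
      have e2 : τ / (2 * m) * m = τ / 2 := by field_simp
      rw [e2] at this
      linarith
    obtain ⟨x, hxball, hxq⟩ := hτsub hqmem
    have hxC : x ∈ C := hball_sub hxball
    have hqp : abs (q - p) = (1 - δ) * m := by
      rw [hq, hm]
      have e : g v₀ + (δ:ℂ) * (p - g v₀) - p = ((1:ℂ) - δ) * (g v₀ - p) := by ring
      rw [e, map_mul]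
      congr 1
      rw [show ((1:ℂ) - δ) = ((1 - δ : ℝ) : ℂ) by push_cast; ring,
        Complex.abs_ofReal, _root_.abs_of_nonneg (by linarith : (0:ℝ) ≤ 1 - δ)]
    have hlt : abs (g x - p) < m := by
      rw [hxq, hqp]
      nlinarith [hm0]
    exact absurd (hmin hxC) (by simpa using not_le.mpr hlt)

/-- An injective holomorphic function on the unit disk has nonvanishing derivative. -/
lemma deriv_ne_zero_of_injOn {h : ℂ → ℂ}
    (hd : DifferentiableOn ℂ h (ball 0 1)) (hinj : InjOn h (ball (0:ℂ) 1))
    {w : ℂ} (hw : w ∈ ball (0:ℂ) 1) : deriv h w ≠ 0 := by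
  intro hder
  set F := fun v => h v - h w with hFdef
  have hFA : AnalyticAt ℂ F w :=
    (hd.analyticAt (isOpen_ball.mem_nhds hw)).sub analyticAt_const
  -- F is not eventually zero near w
  have hne_ev : ¬ ∀ᶠ v in 𝓝 w, F v = 0 := by
    intro hev
    have hball : ∀ᶠ v in 𝓝 w, v ∈ ball (0:ℂ) 1 := isOpen_ball.eventually_mem hw
    have hcomb : ∀ᶠ v in 𝓝[≠] w, F v = 0 ∧ v ∈ ball (0:ℂ) 1 ∧ v ≠ w := by
      apply Filter.Eventually.and ((hev.filter_mono nhdsWithin_le_nhds))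
      apply Filter.Eventually.and ((hball.filter_mono nhdsWithin_le_nhds))
      exact eventually_mem_nhdsWithin
    obtain ⟨v, hFv, hvball, hvw⟩ := hcomb.exists
    rw [hFdef] at hFv
    have : h v = h w := by
      have := sub_eq_zero.mp hFv
      exact this
    exact hvw (hinj hvball hw this)
  have horder_ne_top : analyticOrderAt F w ≠ ⊤ := by
    intro htop
    exact hne_ev (analyticOrderAt_eq_top.mp htop)
  obtain ⟨n, hn⟩ : ∃ n : ℕ, analyticOrderAt F w = (n : ℕ∞) := by
    rcases Option.ne_none_iff_exists'.mp horder_ne_top with ⟨n, hn⟩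
    exact ⟨n, hn⟩
  obtain ⟨g, hgA, hgw, hev⟩ := hFA.analyticOrderAt_eq_natCast.mp hn
  have hFw : F w = 0 := by simp [hFdef]
  have hn0 : n ≠ 0 := by
    rintro rfl
    have := hev.self_of_nhds
    simp only [pow_zero, one_smul, hFw] at this
    exact hgw this.symm
  have hn1 : n ≠ 1 := by
    rintro rfl
    have h1 : HasDerivAt (fun v : ℂ => v - w) 1 w := (hasDerivAt_id w).sub_const w
    have h2 : HasDerivAt g (deriv g w) w := hgA.differentiableAt.hasDerivAt
    have hd1 : HasDerivAt (fun v => (v - w) ^ 1 • g v)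
        ((1:ℂ) * g w + (w - w) * deriv g w) w := by
      simpa only [pow_one, smul_eq_mul, Pi.mul_def] using h1.mul h2
    have hval : (1:ℂ) * g w + (w - w) * deriv g w = g w := by
      rw [sub_self]; ring
    rw [hval] at hd1
    have hderF : deriv F w = deriv h w := by
      rw [hFdef]
      exact deriv_sub_const (h w)
    have : deriv F w = g w := by
      rw [Filter.EventuallyEq.deriv_eq hev]
      exact hd1.deriv
    rw [hderF, hder] at this
    exact hgw this.symm
  have hn2 : 2 ≤ n := by omega
  obtain ⟨ξ, hξ⟩ := IsAlgClosed.exists_pow_nat_eq (g w) (by omega : 0 < n)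
  have hξ0 : ξ ≠ 0 := by
    intro hcon
    rw [hcon, zero_pow hn0] at hξ
    exact hgw hξ.symm
  set G := fun v => (v - w) * (ξ * Complex.exp (Complex.log (g v / g w) / n)) with hGdef
  -- eventual good set
  have hgood : ∀ᶠ v in 𝓝 w, v ∈ ball (0:ℂ) 1 ∧ F v = (v - w) ^ n • g v ∧
      g v / g w ∈ ball (1:ℂ) 1 ∧ AnalyticAt ℂ g v := by
    refine (isOpen_ball.eventually_mem hw).and (hev.and (Filter.Eventually.and ?_
      hgA.eventually_analyticAt))
    have hcont : ContinuousAt (fun v => g v / g w) w := hgA.continuousAt.div_const (g w)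
    have hval : (fun v => g v / g w) w = 1 := div_self hgw
    have : ball (1:ℂ) 1 ∈ 𝓝 ((fun v => g v / g w) w) := by
      rw [hval]
      exact ball_mem_nhds _ one_pos
    exact hcont.eventually_mem this
  -- key pointwise facts on the good set
  have hkey : ∀ v : ℂ, v ∈ ball (0:ℂ) 1 ∧ F v = (v - w) ^ n • g v ∧
      g v / g w ∈ ball (1:ℂ) 1 ∧ AnalyticAt ℂ g v →
      (G v ^ n = F v ∧ DifferentiableAt ℂ G v) := by
    rintro v ⟨hv1, hvF, hvb, hvA⟩
    have hslit : g v / g w ∈ slitPlane := by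
      rw [mem_slitPlane_iff]
      left
      have := mem_ball_iff_norm.mp hvb
      have hre : |(g v / g w - 1).re| ≤ abs (g v / g w - 1) := Complex.abs_re_le_abs _
      simp only [Complex.norm_eq_abs] at this
      have : |(g v / g w).re - 1| < 1 := by
        calc |(g v / g w).re - 1| = |(g v / g w - 1).re| := by simp [Complex.sub_re]
          _ ≤ abs (g v / g w - 1) := hre
          _ < 1 := this
      cases abs_lt.mp this
      linarith
    have hne0 : g v / g w ≠ 0 := slitPlane_ne_zero hslit
    have hncast : (n : ℂ) ≠ 0 := Nat.cast_ne_zero.mpr hn0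
    constructor
    · have estep : G v ^ n = (v - w)^n * (g w * (g v / g w)) := by
        rw [hGdef]
        simp only []
        rw [mul_pow, mul_pow, hξ, ← Complex.exp_nat_mul, mul_div_cancel₀ _ hncast,
          Complex.exp_log hne0]
      have estep2 : g w * (g v / g w) = g v := by
        rw [mul_comm, div_mul_cancel₀ _ hgw]
      rw [estep, estep2, hvF, smul_eq_mul]
    · apply DifferentiableAt.mul
      · exact differentiableAt_id.sub_const w
      · apply DifferentiableAt.const_mul
        apply DifferentiableAt.cexp
        apply DifferentiableAt.div_const
        exact (Complex.differentiableAt_log hslit).comp v (hvA.differentiableAt.div_const (g w))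
  obtain ⟨δ, hδpos, hδ⟩ := Metric.eventually_nhds_iff.mp hgood
  have hGd : DifferentiableOn ℂ G (ball w δ) := by
    intro x hx
    rw [mem_ball] at hx
    exact ((hkey x (hδ hx)).2).differentiableWithinAt
  have hGA : AnalyticAt ℂ G w := hGd.analyticAt (ball_mem_nhds _ hδpos)
  have hGw : G w = 0 := by simp [hGdef]
  -- G is not eventually constant
  have hGnc : ¬ ∀ᶠ v in 𝓝 w, G v = G w := by
    intro hev'
    have hcomb : ∀ᶠ v in 𝓝[≠] w, G v = G w ∧ v ≠ w := by
      exact (hev'.filter_mono nhdsWithin_le_nhds).and eventually_mem_nhdsWithin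
    obtain ⟨v, hGv, hvw⟩ := hcomb.exists
    rw [hGw, hGdef] at hGv
    simp only [mul_eq_zero] at hGv
    rcases hGv with h1 | h3 | h4
    · exact hvw (sub_eq_zero.mp h1)
    · exact hξ0 h3
    · exact Complex.exp_ne_zero _ h4
  have hle : 𝓝 (0:ℂ) ≤ map G (𝓝 w) := by
    have := hGA.eventually_constant_or_nhds_le_map_nhds_aux
    rw [hGw] at this
    exact this.resolve_left (by rwa [hGw] at hGnc)
  have hT : G '' (ball w δ) ∈ 𝓝 (0:ℂ) := hle (image_mem_map (ball_mem_nhds w hδpos))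
  obtain ⟨τ, hτpos, hτsub⟩ := Metric.mem_nhds_iff.mp hT
  -- the two target values
  set ω := Complex.exp (((2 * Real.pi / n : ℝ) : ℂ) * Complex.I) with hω
  have hncast' : (n : ℂ) ≠ 0 := Nat.cast_ne_zero.mpr hn0
  have hωn : ω ^ n = 1 := by
    rw [hω, ← Complex.exp_nat_mul]
    have e : (n:ℂ) * (((2 * Real.pi / n : ℝ) : ℂ) * Complex.I)
        = 2 * (Real.pi:ℂ) * Complex.I := by
      push_cast
      field_simp
    rw [e]
    exact Complex.exp_two_pi_mul_I
  have hω1 : ω ≠ 1 := by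
    rw [hω]
    intro hcon
    rw [Complex.exp_eq_one_iff] at hcon
    obtain ⟨k, hk⟩ := hcon
    have hIne : (2 * (Real.pi:ℂ) * Complex.I) ≠ 0 :=
      mul_ne_zero (mul_ne_zero two_ne_zero (Complex.ofReal_ne_zero.mpr Real.pi_ne_zero))
        Complex.I_ne_zero
    have hncast : (n : ℂ) ≠ 0 := Nat.cast_ne_zero.mpr hn0
    have hlhs : ((2 * Real.pi / n : ℝ) : ℂ) * Complex.I
        = ((1:ℂ)/n) * (2 * (Real.pi:ℂ) * Complex.I) := by
      push_cast
      ring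
    rw [hlhs] at hk
    have hkn : ((1:ℂ)/n) = (k:ℂ) := mul_right_cancel₀ hIne hk
    have h1 : (1:ℂ) = (k:ℂ) * n := by
      rw [← hkn]
      field_simp
    have hint : (1:ℤ) = k * n := by exact_mod_cast h1
    have hdvd : (n:ℤ) ∣ 1 := ⟨k, by rw [hint]; ring⟩
    have hle1 : (n:ℤ) ≤ 1 := Int.le_of_dvd one_pos hdvd
    have hge2 : (2:ℤ) ≤ (n:ℤ) := by exact_mod_cast hn2
    omega
  have hωabs : abs ω = 1 := by
    rw [hω, Complex.abs_exp]
    have hre0 : (((2 * Real.pi / n : ℝ) : ℂ) * Complex.I).re = 0 := by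
      rw [Complex.re_ofReal_mul, Complex.I_re, mul_zero]
    rw [hre0, Real.exp_zero]
  -- pick points
  set t := ((τ/2 : ℝ) : ℂ) with ht
  have ht0 : t ≠ 0 := by
    rw [ht]
    exact Complex.ofReal_ne_zero.mpr (by positivity)
  have htmem : t ∈ ball (0:ℂ) τ := by
    simp only [mem_ball, dist_zero_right, Complex.norm_eq_abs, ht, Complex.abs_ofReal]
    rw [_root_.abs_of_nonneg (by positivity)]
    linarith
  have htωmem : t * ω ∈ ball (0:ℂ) τ := by
    simp only [mem_ball, dist_zero_right, Complex.norm_eq_abs, map_mul, hωabs, mul_one,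
      ht, Complex.abs_ofReal]
    rw [_root_.abs_of_nonneg (by positivity)]
    linarith
  obtain ⟨v₁, hv₁ball, hv₁⟩ := hτsub htmem
  obtain ⟨v₂, hv₂ball, hv₂⟩ := hτsub htωmem
  have hv₁n : F v₁ = t^n := by
    rw [← (hkey v₁ (hδ (mem_ball.mp hv₁ball))).1, hv₁]
  have hv₂n : F v₂ = t^n := by
    rw [← (hkey v₂ (hδ (mem_ball.mp hv₂ball))).1, hv₂, mul_pow, hωn, mul_one]
  have hv₁₂ : v₁ ≠ v₂ := by
    intro hcon
    rw [hcon] at hv₁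
    have heq : t * ω = t * 1 := by rw [mul_one, ← hv₂]; exact hv₁
    exact hω1 (mul_left_cancel₀ ht0 heq)
  have hhv : h v₁ = h v₂ := by
    have e1 : h v₁ = h w + t^n := by rw [← hv₁n, hFdef]; ring
    have e2 : h v₂ = h w + t^n := by rw [← hv₂n, hFdef]; ring
    rw [e1, e2]
  exact hv₁₂ (hinj (hδ (mem_ball.mp hv₁ball)).1 (hδ (mem_ball.mp hv₂ball)).1 hhv)

/-- Inverse of an injective holomorphic map of the disk: existence, holomorphy. -/
lemma inv_pack {h : ℂ → ℂ} {U : Set ℂ}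
    (hd : DifferentiableOn ℂ h (ball 0 1)) (hbij : Set.BijOn h (ball (0:ℂ) 1) U) :
    ∃ f : ℂ → ℂ, MapsTo f U (ball (0:ℂ) 1) ∧ (∀ w ∈ ball (0:ℂ) 1, f (h w) = w) ∧
      (∀ z ∈ U, h (f z) = z) ∧
      ∀ z ∈ U, HasDerivAt f ((deriv h (f z))⁻¹) z := by
  have hinj := hbij.injOn
  set f := Function.invFunOn h (ball (0:ℂ) 1) with hf
  have hInv : InvOn f h (ball (0:ℂ) 1) U := hbij.invOn_invFunOn
  have hleft : ∀ w ∈ ball (0:ℂ) 1, f (h w) = w := fun w hw => hInv.1 hw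
  have hright : ∀ z ∈ U, h (f z) = z := fun z hz => hInv.2 hz
  have hmaps : MapsTo f U (ball (0:ℂ) 1) := by
    intro z hz
    apply Function.invFunOn_mem
    obtain ⟨w, hw, hwz⟩ := hbij.surjOn hz
    exact ⟨w, hw, hwz⟩
  have himg : h '' (ball (0:ℂ) 1) = U := hbij.image_eq
  -- open mapping ingredient
  have hnc : ∀ w ∈ ball (0:ℂ) 1, 𝓝 (h w) ≤ map h (𝓝 w) := by
    intro w hw
    have hA : AnalyticAt ℂ h w := hd.analyticAt (isOpen_ball.mem_nhds hw)
    rcases hA.eventually_constant_or_nhds_le_map_nhds_aux with hc | hle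
    · exfalso
      have hcomb : ∀ᶠ v in 𝓝[≠] w, h v = h w ∧ v ∈ ball (0:ℂ) 1 ∧ v ≠ w := by
        apply Filter.Eventually.and (hc.filter_mono nhdsWithin_le_nhds)
        apply Filter.Eventually.and
          (((isOpen_ball.eventually_mem hw)).filter_mono nhdsWithin_le_nhds)
        exact eventually_mem_nhdsWithin
      obtain ⟨v, hvv, hvball, hvw⟩ := hcomb.exists
      exact hvw (hinj hvball hw hvv)
    · exact hle
  have hUnhds : ∀ z ∈ U, U ∈ 𝓝 z := by
    intro z hz
    have hw : f z ∈ ball (0:ℂ) 1 := hmaps hz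
    have : h '' (ball (0:ℂ) 1) ∈ map h (𝓝 (f z)) := by
      apply image_mem_map
      exact isOpen_ball.mem_nhds hw
    have h2 := hnc (f z) hw this
    rwa [himg, hright z hz] at h2
  have hcont : ∀ z ∈ U, ContinuousAt f z := by
    intro z hz
    have hw : f z ∈ ball (0:ℂ) 1 := hmaps hz
    rw [ContinuousAt]
    intro V hV
    have hV' : V ∩ ball (0:ℂ) 1 ∈ 𝓝 (f z) := inter_mem hV (isOpen_ball.mem_nhds hw)
    have himgV : h '' (V ∩ ball (0:ℂ) 1) ∈ 𝓝 z := by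
      have := hnc (f z) hw (image_mem_map hV')
      rwa [hright z hz] at this
    apply mem_of_superset himgV
    rintro y ⟨v, ⟨hvV, hvball⟩, rfl⟩
    rw [mem_preimage, hleft v hvball]
    exact hvV
  refine ⟨f, hmaps, hleft, hright, ?_⟩
  intro z hz
  have hw : f z ∈ ball (0:ℂ) 1 := hmaps hz
  have hder : HasDerivAt h (deriv h (f z)) (f z) :=
    (hd.differentiableAt (isOpen_ball.mem_nhds hw)).hasDerivAt
  have hne : deriv h (f z) ≠ 0 := deriv_ne_zero_of_injOn hd hinj hw
  apply HasDerivAt.of_local_left_inverse (hcont z hz) hder hne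
  filter_upwards [hUnhds z hz] with y hy
  exact hright y hy

lemma choose_rho {s ε : ℝ} (hs0 : 0 ≤ s) (hs1 : s < 1) (hε : 0 < ε) :
    ∃ ρ : ℝ, s < ρ ∧ ρ < 1 ∧ 0 < ρ ∧ ρ ≤ 1 ∧ s^2*(1/ρ^2 - 1)/(1-s) ≤ ε := by
  set δ := ε * (1-s)/(s^2+1) with hδ
  have hδpos : 0 < δ := by
    apply div_pos (mul_pos hε (by linarith)) (by positivity)
  set ρ := max ((1+s)/2) (1 - δ/8) with hρ
  have hρs : s < ρ := lt_of_lt_of_le (by linarith) (le_max_left _ _)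
  have hρ1 : ρ < 1 := max_lt (by linarith) (by linarith)
  have hρhalf : 1/2 ≤ ρ := le_trans (by linarith) (le_max_left _ _)
  have hρpos : 0 < ρ := by linarith
  have hρδ : 1 - δ/8 ≤ ρ := le_max_right _ _
  have hkey : 1/ρ^2 - 1 ≤ δ := by
    have h1 : 1 - ρ ≤ δ/8 := by linarith
    have h2 : ρ^2 ≥ 1/4 := by nlinarith
    have h3 : 1/ρ^2 - 1 = (1-ρ)*(1+ρ)/ρ^2 := by
      field_simp
      ring
    rw [h3]
    have h4 : (1-ρ)*(1+ρ) ≤ (δ/8) * 2 := by nlinarith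
    calc (1-ρ)*(1+ρ)/ρ^2 ≤ (δ/8*2)/(1/4) := by
          apply div_le_div₀ (by positivity) h4 (by norm_num) h2
      _ = δ := by ring
  refine ⟨ρ, hρs, hρ1, hρpos, hρ1.le, ?_⟩
  have hnum : s^2 * (1/ρ^2 - 1) ≤ s^2 * δ := by
    apply mul_le_mul_of_nonneg_left hkey (by positivity)
  have h1s : 0 < 1 - s := by linarith
  rw [div_le_iff₀ h1s]
  have : s^2 * δ = ε * (1-s) * (s^2/(s^2+1)) := by
    rw [hδ]; field_simp
  have hfrac : s^2/(s^2+1) ≤ 1 := by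
    rw [div_le_one (by positivity)]; linarith
  calc s^2 * (1/ρ^2 - 1) ≤ s^2 * δ := hnum
    _ = ε * (1-s) * (s^2/(s^2+1)) := this
    _ ≤ ε * (1-s) * 1 := by
        apply mul_le_mul_of_nonneg_left hfrac (by positivity)
    _ = ε * (1-s) := by ring
end Auxiliary

set_option maxHeartbeats 2000000 in
/-- **Kernel convergence of the fibers of an invariant tube.**
If the fibers `𝒰_θ` are uniformly bounded simply connected domains containing `0`, with
constant conformal radius at `0` and closures depending continuously on `θ` (Hausdorff
distance), then `θₙ → θ̃` implies the fibers `𝒰_{θₙ}` kernel converge to `𝒰_{θ̃}`: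
every subsequence has kernel `𝒰_{θ̃}`. -/
theorem fibers_kernel_convergence {d : ℕ} (𝒰 : Set (Torus d × ℂ))
    (hopen : IsOpen 𝒰)
    (hbdd : Bornology.IsBounded (Prod.snd '' 𝒰))
    (hzero : ∀ θ : Torus d, (θ, (0:ℂ)) ∈ 𝒰)
    (hne : ∀ θ : Torus d, {z : ℂ | (θ, z) ∈ 𝒰} ≠ Set.univ)
    (h : Torus d → ℂ → ℂ) (c : ℝ) (hc : 0 < c)
    (hhol : ∀ θ : Torus d, DifferentiableOn ℂ (h θ) (ball (0:ℂ) 1))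
    (hbij : ∀ θ : Torus d, Set.BijOn (h θ) (ball (0:ℂ) 1) {z : ℂ | (θ, z) ∈ 𝒰})
    (hfix : ∀ θ : Torus d, h θ 0 = 0)
    (hR : ∀ θ : Torus d, deriv (h θ) 0 = (c : ℂ))
    (K : Torus d → NonemptyCompacts ℂ)
    (hK : ∀ θ : Torus d, (K θ : Set ℂ) = closure {z : ℂ | (θ, z) ∈ 𝒰})
    (hKcont : Continuous K)
    (θseq : ℕ → Torus d) (θt : Torus d)
    (hθ : Tendsto θseq atTop (𝓝 θt)) :
    ∀ φ : ℕ → ℕ, StrictMono φ →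
      caraKernel (fun n => {z : ℂ | (θseq (φ n), z) ∈ 𝒰}) = {z : ℂ | (θt, z) ∈ 𝒰} := by
  intro φ hφ
  set θn : ℕ → Torus d := fun n => θseq (φ n) with hθndef
  have hθn : Tendsto θn atTop (𝓝 θt) := hθ.comp hφ.tendsto_atTop
  set U : Torus d → Set ℂ := fun θ => {z : ℂ | (θ, z) ∈ 𝒰} with hUdef
  have hUopen : ∀ θ, IsOpen (U θ) := by
    intro θ
    exact hopen.preimage (Continuous.prodMk_right θ)
  have hcompact : ∀ E : Set ℂ, IsCompact E → E ⊆ U θt →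
      ∀ᶠ n in atTop, E ⊆ U (θn n) := by
    intro E hE hEsub
    obtain ⟨V, W, hVopen, hWopen, hV, hW, hVW⟩ :=
      generalized_tube_lemma isCompact_singleton hE hopen (by
        rintro ⟨θ', x⟩ ⟨hθ', hx⟩
        simp only [mem_singleton_iff] at hθ'
        subst hθ'
        exact hEsub hx)
    have hVθt : V ∈ 𝓝 θt := hVopen.mem_nhds (hV rfl)
    filter_upwards [hθn.eventually_mem hVθt] with n hn z hz
    exact hVW ⟨hn, hW hz⟩
  -- inverse maps
  have hpack := fun θ : Torus d => inv_pack (hhol θ) (hbij θ)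
  choose f hfmaps hfleft hfright hfder using hpack
  have h0ball : (0:ℂ) ∈ ball (0:ℂ) 1 := mem_ball_self one_pos
  have hf0 : ∀ θ, f θ 0 = 0 := by
    intro θ
    have := hfleft θ 0 h0ball
    rwa [hfix θ] at this
  have h0U : ∀ θ, (0:ℂ) ∈ U θ := fun θ => hzero θ
  have hcne : (c:ℂ) ≠ 0 := Complex.ofReal_ne_zero.mpr hc.ne'
  have hfder0 : ∀ θ, HasDerivAt (f θ) (((c:ℝ):ℂ))⁻¹ 0 := by
    intro θ
    have := hfder θ 0 (h0U θ)
    rwa [hf0 θ, hR θ] at this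
  have hht0 : HasDerivAt (h θt) ((c:ℝ):ℂ) 0 := by
    have := ((hhol θt).differentiableAt (isOpen_ball.mem_nhds h0ball)).hasDerivAt
    rwa [hR θt] at this
  ext z
  simp only [caraKernel, mem_insert_iff, mem_setOf_eq]
  constructor
  · -- kernel ⊆ fiber
    rintro (rfl | ⟨Ω, hΩopen, hΩconn, hzΩ, hevΩ⟩)
    · exact hzero θt
    · -- z lies in Ω, Ω ⊆ U (θn n) eventually
      obtain ⟨r, hrpos, hrsub⟩ : ∃ r > 0, closedBall z r ⊆ Ω := by
        obtain ⟨r, hr, hsub⟩ := nhds_basis_closedBall.mem_iff.mp (hΩopen.mem_nhds hzΩ)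
        exact ⟨r, hr, hsub⟩
      have hrU : ∀ᶠ n in atTop, closedBall z r ⊆ U (θn n) :=
        hevΩ.mono (fun n hn => hrsub.trans hn)
      have hzU : ∀ᶠ n in atTop, z ∈ U (θn n) :=
        hrU.mono (fun n hn => hn (mem_closedBall_self hrpos.le))
      -- z is in the closure of the limit fiber
      have hKconv : Tendsto (fun n => K (θn n)) atTop (𝓝 (K θt)) :=
        (hKcont.tendsto θt).comp hθn
      have hdist0 : Tendsto (fun n => dist (K (θn n)) (K θt)) atTop (𝓝 0) :=
        tendsto_iff_dist_tendsto_zero.mp hKconv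
      have hzclos : z ∈ closure (U θt) := by
        have hinf : infDist z (K θt : Set ℂ) = 0 := by
          refine le_antisymm ?_ infDist_nonneg
          refine ge_of_tendsto hdist0 ?_
          filter_upwards [hzU] with n hzn
          have hzn' : z ∈ (K (θn n) : Set ℂ) := by
            rw [hK (θn n)]
            exact subset_closure hzn
          have hfin : EMetric.hausdorffEdist (K (θn n) : Set ℂ) (K θt : Set ℂ) ≠ ⊤ :=
            Metric.hausdorffEdist_ne_top_of_nonempty_of_bounded (K (θn n)).nonempty
              (K θt).nonempty (K (θn n)).isCompact.isBounded (K θt).isCompact.isBounded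
          calc infDist z (K θt : Set ℂ)
              ≤ infDist z (K (θn n) : Set ℂ)
                + Metric.hausdorffDist (K (θn n) : Set ℂ) (K θt : Set ℂ) :=
                Metric.infDist_le_infDist_add_hausdorffDist hfin
            _ = Metric.hausdorffDist (K (θn n) : Set ℂ) (K θt : Set ℂ) := by
                rw [Metric.infDist_zero_of_mem hzn', zero_add]
            _ = dist (K (θn n)) (K θt) := (NonemptyCompacts.dist_eq).symm
        have hmem : z ∈ (K θt : Set ℂ) :=
          ((K θt).isCompact.isClosed.mem_iff_infDist_zero (K θt).nonempty).mpr hinf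
        rwa [hK θt] at hmem
      -- a nearby point of the limit fiber
      obtain ⟨z', hz'U, hz'close⟩ : ∃ z' ∈ U θt, dist z z' < r/4 := by
        obtain ⟨z', hz'U, hd'⟩ := Metric.mem_closure_iff.mp hzclos (r/4) (by linarith)
        exact ⟨z', hz'U, hd'⟩
      obtain ⟨w, hwball, hwz'⟩ := (hbij θt).surjOn hz'U
      have hwabs : abs w < 1 := by
        simpa [mem_ball, dist_zero_right, Complex.norm_eq_abs] using hwball
      -- the composite maps gm n = f (θn n) ∘ h θt on disks of radius ρ < 1
      have hgm : ∀ ρ : ℝ, 0 < ρ → ρ < 1 → ∀ n : ℕ,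
          (h θt '' closedBall 0 ρ ⊆ U (θn n)) →
          (DifferentiableOn ℂ (f (θn n) ∘ h θt) (ball 0 ρ) ∧
           MapsTo (f (θn n) ∘ h θt) (ball 0 ρ) (ball 0 1) ∧
           (f (θn n) ∘ h θt) 0 = 0 ∧ deriv (f (θn n) ∘ h θt) 0 = 1) := by
        intro ρ hρ0 hρ1 n hsub
        have hmem : ∀ v ∈ ball (0:ℂ) ρ, h θt v ∈ U (θn n) := by
          intro v hv
          apply hsub
          exact mem_image_of_mem _ (ball_subset_closedBall hv)
        have hballsub : ball (0:ℂ) ρ ⊆ ball (0:ℂ) 1 := ball_subset_ball hρ1.le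
        refine ⟨?_, ?_, ?_, ?_⟩
        · intro v hv
          have h1 : DifferentiableAt ℂ (h θt) v :=
            (hhol θt).differentiableAt (isOpen_ball.mem_nhds (hballsub hv))
          have h2 : DifferentiableAt ℂ (f (θn n)) (h θt v) :=
            (hfder (θn n) (h θt v) (hmem v hv)).differentiableAt
          exact (h2.comp v h1).differentiableWithinAt
        · intro v hv
          exact hfmaps (θn n) (hmem v hv)
        · simp only [Function.comp_apply, hfix θt, hf0 (θn n)]
        · have hcomp : HasDerivAt (f (θn n) ∘ h θt) ((((c:ℝ):ℂ))⁻¹ * ((c:ℝ):ℂ)) 0 := by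
            apply HasDerivAt.comp
            · rw [hfix θt]
              exact hfder0 (θn n)
            · exact hht0
          rw [inv_mul_cancel₀ hcne] at hcomp
          exact hcomp.deriv
      -- Step A : bound the preimages of z'
      set s₁ := (1 + abs w)/2 with hs₁
      set ε₁ := (1 - abs w)/4 with hε₁
      have hwnn : 0 ≤ abs w := Complex.abs.nonneg w
      have hs₁0 : (0:ℝ) ≤ s₁ := by rw [hs₁]; linarith
      have hs₁1 : s₁ < 1 := by rw [hs₁]; linarith
      have hε₁0 : (0:ℝ) < ε₁ := by rw [hε₁]; linarith
      obtain ⟨ρ₁, hρ₁s, hρ₁1, hρ₁0, hρ₁le, hρ₁bound⟩ :=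
        choose_rho (s := s₁) (ε := ε₁) hs₁0 hs₁1 hε₁0
      have hE₁ : IsCompact (h θt '' closedBall 0 ρ₁) :=
        (isCompact_closedBall _ _).image_of_continuousOn
          ((hhol θt).continuousOn.mono (closedBall_subset_ball hρ₁1))
      have hE₁sub : h θt '' closedBall 0 ρ₁ ⊆ U θt := by
        rintro x ⟨v, hv, rfl⟩
        exact (hbij θt).mapsTo (closedBall_subset_ball hρ₁1 hv)
      have hevA : ∀ᶠ n in atTop, abs (f (θn n) z') ≤ abs w + ε₁ := by
        filter_upwards [hcompact _ hE₁ hE₁sub] with n hn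
        obtain ⟨hgd, hgmTo, hg0, hg1⟩ := hgm ρ₁ hρ₁0 hρ₁1 n hn
        have happ := approx_id hρ₁0 hρ₁le (by positivity) hρ₁s hgd hgmTo hg0 hg1
          (v := w) (by rw [hs₁]; linarith)
        have : abs ((f (θn n) ∘ h θt) w - w) ≤ ε₁ := le_trans happ hρ₁bound
        rw [Function.comp_apply, hwz'] at this
        have htr : abs (f (θn n) z') ≤ abs ((f (θn n) z') - w) + abs w := by
          simpa using Complex.abs.add_le ((f (θn n) z') - w) w
        linarith
      set β := abs w + ε₁ with hβ
      have hβ1 : β < 1 := by rw [hβ, hε₁]; linarith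
      have hβ0 : 0 ≤ β := by rw [hβ, hε₁]; linarith
      -- Step B : bound the preimages of z
      set γ := (1/4 + β)/(1 + β/4) with hγ
      have hγ1 : γ < 1 := by
        rw [hγ, div_lt_one (by linarith)]
        linarith
      have hγ0 : 0 ≤ γ := by positivity
      have hevB : ∀ᶠ n in atTop, abs (f (θn n) z) ≤ γ := by
        filter_upwards [hrU, hevA] with n hrn hbn
        have hzmem : z ∈ U (θn n) := hrn (mem_closedBall_self hrpos.le)
        have hz'mem : z' ∈ U (θn n) := by
          apply hrn
          rw [mem_closedBall, dist_comm]
          linarith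
        set an := f (θn n) z with han
        set bn := f (θn n) z' with hbn'
        have hanball : an ∈ ball (0:ℂ) 1 := hfmaps (θn n) hzmem
        have hbnball : bn ∈ ball (0:ℂ) 1 := hfmaps (θn n) hz'mem
        have hanabs : abs an < 1 := by
          simpa [mem_ball, dist_zero_right, Complex.norm_eq_abs] using hanball
        have hbnabs : abs bn < 1 := by
          simpa [mem_ball, dist_zero_right, Complex.norm_eq_abs] using hbnball
        -- Schwarz–Pick for ψ
        set ψ := fun u : ℂ => f (θn n) (z + (r:ℂ) * u) with hψ
        have hrC : ((r:ℝ):ℂ) ≠ 0 := Complex.ofReal_ne_zero.mpr hrpos.ne'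
        have hψmem : ∀ u ∈ ball (0:ℂ) 1, z + (r:ℂ) * u ∈ U (θn n) := by
          intro u hu
          apply hrn
          rw [mem_closedBall]
          have : dist (z + (r:ℂ) * u) z = abs ((r:ℂ) * u) := by
            rw [Complex.dist_eq]
            congr 1
            ring
          rw [this, map_mul, Complex.abs_ofReal, _root_.abs_of_nonneg hrpos.le]
          have hu' : abs u < 1 := by
            simpa [mem_ball, dist_zero_right, Complex.norm_eq_abs] using hu
          nlinarith
        have hψd : DifferentiableOn ℂ ψ (ball 0 1) := by
          intro u hu
          have h1 : DifferentiableAt ℂ (fun u : ℂ => z + (r:ℂ) * u) u :=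
            (differentiableAt_const z).add ((differentiableAt_const _).mul differentiableAt_id)
          have h2 : DifferentiableAt ℂ (f (θn n)) (z + (r:ℂ) * u) :=
            (hfder (θn n) _ (hψmem u hu)).differentiableAt
          exact (h2.comp u h1).differentiableWithinAt
        have hψm : MapsTo ψ (ball 0 1) (closedBall 0 1) := by
          intro u hu
          exact ball_subset_closedBall (hfmaps (θn n) (hψmem u hu))
        set u' := (z' - z)/(r:ℂ) with hu'
        have hu'abs : abs u' ≤ 1/4 := by
          rw [hu', map_div₀, Complex.abs_ofReal, _root_.abs_of_nonneg hrpos.le]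
          rw [div_le_div_iff₀ hrpos (by norm_num : (0:ℝ) < 4)]
          have : abs (z' - z) = dist z z' := by rw [Complex.dist_eq, Complex.norm_eq_abs, Complex.abs.map_sub]
          rw [this]
          linarith
        have hu'ball : u' ∈ ball (0:ℂ) 1 := by
          simp only [mem_ball, dist_zero_right, Complex.norm_eq_abs]
          linarith
        have hψ0 : ψ 0 = an := by rw [hψ]; simp [han]
        have hψu' : ψ u' = bn := by
          rw [hψ, hbn']
          congr 1
          rw [hu']
          field_simp
          ring_nf
        have hSP := schwarz_pick one_pos one_pos hψd hψm hu'ball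
        rw [hψ0, hψu'] at hSP
        simp only [one_pow, Complex.ofReal_one, one_mul, div_one] at hSP
        -- convert and apply the quantitative bound
        have hconj : abs (1 - conj an * bn) = abs (1 - conj bn * an) := by
          rw [← Complex.abs_conj (1 - conj an * bn)]
          congr 1
          simp only [map_sub, map_one, map_mul, Complex.conj_conj]
          ring
        have hab : abs (an - bn) ≤ (1/4) * abs (1 - conj bn * an) := by
          rw [Complex.abs.map_sub an bn]
          calc abs (bn - an) ≤ abs u' * abs (1 - conj an * bn) := hSP
            _ ≤ (1/4) * abs (1 - conj an * bn) := by
                apply mul_le_mul_of_nonneg_right hu'abs (Complex.abs.nonneg _)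
            _ = (1/4) * abs (1 - conj bn * an) := by rw [hconj]
        have hbound := pseudo_hyp_bound hanabs hbnabs (by norm_num) (by norm_num) hab
        -- monotonicity in |bn| ≤ β
        have hmono : (1/4 + abs bn)/(1 + (1/4) * abs bn) ≤ γ := by
          rw [hγ, div_le_div_iff₀ (by positivity) (by linarith)]
          have hbnn : 0 ≤ abs bn := Complex.abs.nonneg bn
          nlinarith
        calc abs an ≤ (1/4 + abs bn)/(1 + (1/4) * abs bn) := hbound
          _ ≤ γ := hmono
      -- Step C : conclude
      set s₂ := (1 + γ)/2 with hs₂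
      set ε₂ := (1 - γ)/6 with hε₂
      have hs₂0 : (0:ℝ) ≤ s₂ := by rw [hs₂]; linarith
      have hs₂1 : s₂ < 1 := by rw [hs₂]; linarith
      have hε₂0 : (0:ℝ) < ε₂ := by rw [hε₂]; linarith
      obtain ⟨ρ₂, hρ₂s, hρ₂1, hρ₂0, hρ₂le, hρ₂bound⟩ :=
        choose_rho (s := s₂) (ε := ε₂) hs₂0 hs₂1 hε₂0
      have hE₂ : IsCompact (h θt '' closedBall 0 ρ₂) :=
        (isCompact_closedBall _ _).image_of_continuousOn
          ((hhol θt).continuousOn.mono (closedBall_subset_ball hρ₂1))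
      have hE₂sub : h θt '' closedBall 0 ρ₂ ⊆ U θt := by
        rintro x ⟨v, hv, rfl⟩
        exact (hbij θt).mapsTo (closedBall_subset_ball hρ₂1 hv)
      obtain ⟨n, hnC, hnB, hnr⟩ :=
        ((hcompact _ hE₂ hE₂sub).and (hevB.and hrU)).exists
      obtain ⟨hgd, hgmTo, hg0, hg1⟩ := hgm ρ₂ hρ₂0 hρ₂1 n hnC
      have hcl : ∀ v ∈ closedBall (0:ℂ) s₂, abs ((f (θn n) ∘ h θt) v - v) ≤ ε₂ := by
        intro v hv
        have hvabs : abs v ≤ s₂ := by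
          simpa [mem_closedBall, dist_zero_right, Complex.norm_eq_abs] using hv
        exact le_trans (approx_id hρ₂0 hρ₂le (by positivity) hρ₂s hgd hgmTo hg0 hg1 hvabs)
          hρ₂bound
      have hzmem : z ∈ U (θn n) := hnr (mem_closedBall_self hrpos.le)
      have hp : abs (f (θn n) z) + 2*ε₂ < s₂ := by
        rw [hε₂, hs₂]
        have := hnB
        linarith
      obtain ⟨v, hvball, hveq⟩ := exists_preimage hρ₂s (by rw [hs₂]; linarith)
        hgd hε₂0.le hcl hp
      have hvabs : abs v < s₂ := by
        simpa [mem_ball, dist_zero_right, Complex.norm_eq_abs] using hvball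
      have hvball1 : v ∈ ball (0:ℂ) 1 := by
        simp only [mem_ball, dist_zero_right, Complex.norm_eq_abs]
        calc abs v < s₂ := hvabs
          _ < ρ₂ := hρ₂s
          _ < 1 := hρ₂1
      have hhv : h θt v ∈ U (θn n) := by
        apply hnC
        apply mem_image_of_mem
        rw [mem_closedBall, dist_zero_right, Complex.norm_eq_abs]
        calc abs v ≤ s₂ := hvabs.le
          _ ≤ ρ₂ := hρ₂s.le
      have hfin : h θt v = z := by
        have e1 : h (θn n) ((f (θn n) ∘ h θt) v) = h θt v := by
          rw [Function.comp_apply]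
          exact hfright (θn n) _ hhv
        have e2 : h (θn n) (f (θn n) z) = z := hfright (θn n) z hzmem
        rw [hveq] at e1
        rw [← e1, e2]
      rw [← hfin]
      exact (hbij θt).mapsTo hvball1
  · -- fiber ⊆ kernel
    intro hzU
    obtain ⟨r, hrpos, hrsub⟩ : ∃ r > 0, closedBall z r ⊆ U θt := by
      obtain ⟨r, hr, hsub⟩ := nhds_basis_closedBall.mem_iff.mp ((hUopen θt).mem_nhds hzU)
      exact ⟨r, hr, hsub⟩
    right
    refine ⟨ball z r, isOpen_ball, ⟨⟨z, mem_ball_self hrpos⟩,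
      (convex_ball z r).isPreconnected⟩, mem_ball_self hrpos, ?_⟩
    filter_upwards [hcompact (closedBall z r) (isCompact_closedBall _ _) hrsub] with n hn
    exact (ball_subset_closedBall).trans hn
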